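/- Let {X_t} be a stationary process with autocovariance γ(k) = C ℓ(k) k^{2d−1} where 0 < d < 1/2, C > 0, and ℓ is slowly varying with ℓ(k) → (2d+1)/(4d). Then var(Σ_{t=1}^{n} X_t) ∼ C ℓ(n) n^{2d+1} / (d(2d+1)) as n → ∞. -/

import Mathlib

open MeasureTheory ProbabilityTheory Real Filter

/-- Covariance of two real random variables. -/
noncomputable def covar {Ω : Type*} [MeasurableSpace Ω] (μ : Measure Ω) (X Y : Ω → ℝ) : ℝ :=
  ∫ ω, X ω * Y ω ∂μ - (∫ ω, X ω ∂μ) * (∫ ω, Y ω ∂μ)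

lemma sum_rpow_bounds (p : ℝ) (hp : -1 < p) (n : ℕ) (hn : 1 ≤ n) :
    ((n:ℝ)^(p+1) - 1)/(p+1) ≤ ∑ k ∈ Finset.Icc 1 n, (k:ℝ)^p ∧
    ∑ k ∈ Finset.Icc 1 n, (k:ℝ)^p ≤ ((n:ℝ)^(p+1) - 1)/(p+1) + (1 + (n:ℝ)^p) := by
  set f : ℝ → ℝ := fun x => x ^ p with hf
  have hint : ∫ x in (1:ℕ)..(n:ℕ), f x = ((n:ℝ)^(p+1) - 1)/(p+1) := by
    rw [Nat.cast_one, integral_rpow (Or.inl hp), one_rpow]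
  have hsplit_top : ∑ k ∈ Finset.Icc 1 n, (k:ℝ)^p
      = (∑ k ∈ Finset.Ico 1 n, (k:ℝ)^p) + (n:ℝ)^p := by
    rw [← Finset.Ico_add_one_right_eq_Icc, Finset.sum_Ico_succ_top hn]
  have hsplit_bot : ∑ k ∈ Finset.Icc 1 n, (k:ℝ)^p
      = 1 + ∑ i ∈ Finset.Ico 1 n, ((i:ℝ)+1)^p := by
    rw [← Finset.Ico_add_one_right_eq_Icc, Finset.sum_eq_sum_Ico_succ_bot (by omega : 1 < n + 1)]
    rw [Nat.cast_one, one_rpow]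
    congr 1
    rw [Finset.sum_Ico_eq_sum_range, Finset.sum_Ico_eq_sum_range]
    apply Finset.sum_congr rfl
    intro i _
    push_cast
    ring_nf
  have hnp : (0:ℝ) ≤ (n:ℝ)^p := rpow_nonneg (Nat.cast_nonneg n) p
  rcases le_or_gt 0 p with hp0 | hp0
  · -- monotone case
    have hmono : MonotoneOn f (Set.Icc ((1:ℕ):ℝ) ((n:ℕ):ℝ)) := by
      intro x hx y hy hxy
      exact rpow_le_rpow (le_trans (by norm_num) hx.1) hxy hp0
    have h1 := hmono.integral_le_sum_Ico hn
    have h2 := hmono.sum_le_integral_Ico hn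
    constructor
    · rw [← hint]
      calc (∫ x in (1:ℕ)..(n:ℕ), f x) ≤ ∑ i ∈ Finset.Ico 1 n, f ((i:ℕ)+1 : ℕ) := h1
        _ = ∑ i ∈ Finset.Ico 1 n, ((i:ℝ)+1)^p := by push_cast; rfl
        _ ≤ 1 + ∑ i ∈ Finset.Ico 1 n, ((i:ℝ)+1)^p := by linarith
        _ = _ := hsplit_bot.symm
    · rw [← hint, hsplit_top]
      have : ∑ k ∈ Finset.Ico 1 n, (k:ℝ)^p ≤ ∫ x in (1:ℕ)..(n:ℕ), f x := h2
      linarith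
  · -- antitone case
    have hanti : AntitoneOn f (Set.Icc ((1:ℕ):ℝ) ((n:ℕ):ℝ)) := by
      intro x hx y hy hxy
      exact rpow_le_rpow_of_nonpos (lt_of_lt_of_le (by norm_num) hx.1) hxy hp0.le
    have h1 := hanti.integral_le_sum_Ico hn
    have h2 := hanti.sum_le_integral_Ico hn
    constructor
    · rw [← hint, hsplit_top]
      have : (∫ x in (1:ℕ)..(n:ℕ), f x) ≤ ∑ k ∈ Finset.Ico 1 n, (k:ℝ)^p := h1
      linarith
    · rw [← hint, hsplit_bot]
      have : ∑ i ∈ Finset.Ico 1 n, ((i:ℝ)+1)^p ≤ ∫ x in (1:ℕ)..(n:ℕ), f x := by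
        refine le_trans (le_of_eq ?_) h2
        apply Finset.sum_congr rfl
        intro i _
        push_cast
        rfl
      linarith

lemma tendsto_rpow_natCast_atTop {q : ℝ} (hq : 0 < q) :
    Tendsto (fun n : ℕ => (n:ℝ)^q) atTop atTop :=
  (tendsto_rpow_atTop hq).comp (tendsto_natCast_atTop_atTop (R := ℝ))

lemma sum_rpow_div_tendsto (p : ℝ) (hp : -1 < p) :
    Tendsto (fun n : ℕ => (∑ k ∈ Finset.Icc 1 n, (k:ℝ)^p) / (n:ℝ)^(p+1))
      atTop (nhds (1/(p+1))) := by
  have hp1 : (0:ℝ) < p + 1 := by linarith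
  have hx : Tendsto (fun n : ℕ => (n:ℝ)^(p+1)) atTop atTop := tendsto_rpow_natCast_atTop hp1
  have t1 : Tendsto (fun n : ℕ => ((n:ℝ)^(p+1))⁻¹) atTop (nhds 0) := tendsto_inv_atTop_zero.comp hx
  have t2 : Tendsto (fun n : ℕ => (n:ℝ)^p / (n:ℝ)^(p+1)) atTop (nhds 0) := by
    apply Tendsto.congr' _ (tendsto_inv_atTop_zero.comp (tendsto_natCast_atTop_atTop (R := ℝ)))
    filter_upwards [eventually_ge_atTop 1] with n hn
    have hn0 : (0:ℝ) < (n:ℝ) := by exact_mod_cast hn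
    rw [Function.comp_apply, ← rpow_neg_one (n:ℝ), ← rpow_sub hn0]
    norm_num
  have hlo : Tendsto (fun n : ℕ => (((n:ℝ)^(p+1) - 1)/(p+1)) / (n:ℝ)^(p+1))
      atTop (nhds (1/(p+1))) := by
    have : Tendsto (fun n : ℕ => 1/(p+1) - ((n:ℝ)^(p+1))⁻¹ / (p+1)) atTop (nhds (1/(p+1))) := by
      have := (t1.div_const (p+1)).const_sub (1/(p+1))
      simpa using this
    apply Tendsto.congr' _ this
    filter_upwards [eventually_ge_atTop 1] with n hn
    have hx0 : (0:ℝ) < (n:ℝ)^(p+1) := rpow_pos_of_pos (by exact_mod_cast hn) _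
    field_simp
    try ring_nf
    try exact Or.inl trivial
  have hhi : Tendsto (fun n : ℕ =>
      ((((n:ℝ)^(p+1) - 1)/(p+1)) + (1 + (n:ℝ)^p)) / (n:ℝ)^(p+1)) atTop (nhds (1/(p+1))) := by
    have : Tendsto (fun n : ℕ =>
        (((n:ℝ)^(p+1) - 1)/(p+1)) / (n:ℝ)^(p+1) + (((n:ℝ)^(p+1))⁻¹ + (n:ℝ)^p / (n:ℝ)^(p+1)))
        atTop (nhds (1/(p+1) + (0 + 0))) := hlo.add (t1.add t2)
    rw [add_zero, add_zero] at this
    apply Tendsto.congr _ this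
    intro n
    rw [add_div, add_div, one_div]
  apply tendsto_of_tendsto_of_tendsto_of_le_of_le' hlo hhi
  · filter_upwards [eventually_ge_atTop 1] with n hn
    have hx0 : (0:ℝ) < (n:ℝ)^(p+1) := rpow_pos_of_pos (by exact_mod_cast hn) _
    exact div_le_div_of_nonneg_right (sum_rpow_bounds p hp n hn).1 hx0.le
  · filter_upwards [eventually_ge_atTop 1] with n hn
    have hx0 : (0:ℝ) < (n:ℝ)^(p+1) := rpow_pos_of_pos (by exact_mod_cast hn) _
    exact div_le_div_of_nonneg_right (sum_rpow_bounds p hp n hn).2 hx0.le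

lemma weighted_sum_div_tendsto (p : ℝ) (hp : -1 < p) (c : ℕ → ℝ) (A : ℝ)
    (hc : Tendsto c atTop (nhds A)) :
    Tendsto (fun n : ℕ => (∑ k ∈ Finset.Icc 1 n, c k * (k:ℝ)^p) / (n:ℝ)^(p+1))
      atTop (nhds (A/(p+1))) := by
  have hp1 : (0:ℝ) < p + 1 := by linarith
  have hE1 := sum_rpow_div_tendsto p hp
  -- error term tends to zero
  have herr : Tendsto (fun n : ℕ => (∑ k ∈ Finset.Icc 1 n, (c k - A) * (k:ℝ)^p) / (n:ℝ)^(p+1))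
      atTop (nhds 0) := by
    rw [NormedAddCommGroup.tendsto_nhds_zero]
    intro ε hε
    set M : ℝ := 2/(p+1) with hM
    have hM0 : 0 < M := by positivity
    set δ : ℝ := ε/(2*M) with hδ
    have hδ0 : 0 < δ := by positivity
    obtain ⟨N0, hN0⟩ := (Metric.tendsto_atTop.1 hc δ hδ0)
    set N : ℕ := max N0 1 with hN
    set D : ℝ := ∑ k ∈ Finset.Icc 1 N, |c k - A| * (k:ℝ)^p with hD
    have hDx : Tendsto (fun n : ℕ => D / (n:ℝ)^(p+1)) atTop (nhds 0) := by
      have hx : Tendsto (fun n : ℕ => (n:ℝ)^(p+1)) atTop atTop :=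
        (tendsto_rpow_atTop hp1).comp (tendsto_natCast_atTop_atTop (R := ℝ))
      simpa [div_eq_mul_inv] using (tendsto_inv_atTop_zero.comp hx).const_mul D
    have hxM : ∀ᶠ n : ℕ in atTop, (∑ k ∈ Finset.Icc 1 n, (k:ℝ)^p) / (n:ℝ)^(p+1) ≤ M := by
      filter_upwards [hE1.eventually_le_const (show 1/(p+1) < M by
        rw [hM, div_lt_div_iff₀ hp1 hp1]; nlinarith)] with n h
      exact h
    have hDsmall : ∀ᶠ n : ℕ in atTop, D / (n:ℝ)^(p+1) < ε/2 :=
      hDx.eventually_lt_const (by positivity)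
    filter_upwards [eventually_ge_atTop N, eventually_ge_atTop 1, hxM, hDsmall] with n hnN hn1 hxMn hDn
    have hx0 : (0:ℝ) < (n:ℝ)^(p+1) := rpow_pos_of_pos (by exact_mod_cast hn1) _
    -- bound the sum
    have hsplit : ∑ k ∈ Finset.Icc 1 n, |c k - A| * (k:ℝ)^p
        = D + ∑ k ∈ Finset.Ico (N+1) (n+1), |c k - A| * (k:ℝ)^p := by
      rw [hD, ← Finset.Ico_add_one_right_eq_Icc, ← Finset.Ico_add_one_right_eq_Icc,
        ← Finset.sum_Ico_consecutive _ (by omega : 1 ≤ N+1) (by omega : N+1 ≤ n+1)]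
    have htail : ∑ k ∈ Finset.Ico (N+1) (n+1), |c k - A| * (k:ℝ)^p
        ≤ δ * ∑ k ∈ Finset.Icc 1 n, (k:ℝ)^p := by
      calc ∑ k ∈ Finset.Ico (N+1) (n+1), |c k - A| * (k:ℝ)^p
          ≤ ∑ k ∈ Finset.Ico (N+1) (n+1), δ * (k:ℝ)^p := by
            apply Finset.sum_le_sum
            intro k hk
            have hkN : N0 ≤ k := by
              have := (Finset.mem_Ico.1 hk).1; omega
            have : |c k - A| ≤ δ := by
              have := hN0 k hkN
              rw [Real.dist_eq] at this
              exact this.le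
            exact mul_le_mul_of_nonneg_right this (rpow_nonneg (Nat.cast_nonneg k) p)
        _ ≤ ∑ k ∈ Finset.Icc 1 n, δ * (k:ℝ)^p := by
            apply Finset.sum_le_sum_of_subset_of_nonneg
            · intro k hk
              rw [Finset.mem_Ico] at hk
              rw [Finset.mem_Icc]
              omega
            · intro k _ _
              positivity
        _ = δ * ∑ k ∈ Finset.Icc 1 n, (k:ℝ)^p := by rw [Finset.mul_sum]
    have habs : |∑ k ∈ Finset.Icc 1 n, (c k - A) * (k:ℝ)^p|
        ≤ ∑ k ∈ Finset.Icc 1 n, |c k - A| * (k:ℝ)^p := by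
      refine (Finset.abs_sum_le_sum_abs _ _).trans (le_of_eq ?_)
      apply Finset.sum_congr rfl
      intro k _
      rw [abs_mul, abs_of_nonneg (rpow_nonneg (Nat.cast_nonneg k) p)]
    rw [norm_div, Real.norm_eq_abs, Real.norm_eq_abs, abs_of_pos hx0]
    calc |∑ k ∈ Finset.Icc 1 n, (c k - A) * (k:ℝ)^p| / (n:ℝ)^(p+1)
        ≤ (D + δ * ∑ k ∈ Finset.Icc 1 n, (k:ℝ)^p) / (n:ℝ)^(p+1) := by
          apply div_le_div_of_nonneg_right _ hx0.le <;> try exact hx0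
          calc |∑ k ∈ Finset.Icc 1 n, (c k - A) * (k:ℝ)^p|
              ≤ ∑ k ∈ Finset.Icc 1 n, |c k - A| * (k:ℝ)^p := habs
            _ = D + ∑ k ∈ Finset.Ico (N+1) (n+1), |c k - A| * (k:ℝ)^p := hsplit
            _ ≤ D + δ * ∑ k ∈ Finset.Icc 1 n, (k:ℝ)^p := by linarith
      _ = D / (n:ℝ)^(p+1) + δ * ((∑ k ∈ Finset.Icc 1 n, (k:ℝ)^p) / (n:ℝ)^(p+1)) := by
          rw [add_div, mul_div_assoc]
      _ < ε/2 + δ * M := by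
          have h2 : δ * ((∑ k ∈ Finset.Icc 1 n, (k:ℝ)^p) / (n:ℝ)^(p+1)) ≤ δ * M :=
            mul_le_mul_of_nonneg_left hxMn hδ0.le
          linarith
      _ = ε := by
          rw [hδ]; field_simp; ring
  -- combine
  have hmain : Tendsto (fun n : ℕ =>
      A * ((∑ k ∈ Finset.Icc 1 n, (k:ℝ)^p) / (n:ℝ)^(p+1))
      + (∑ k ∈ Finset.Icc 1 n, (c k - A) * (k:ℝ)^p) / (n:ℝ)^(p+1))
      atTop (nhds (A * (1/(p+1)) + 0)) := (hE1.const_mul A).add herr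
  rw [add_zero, mul_one_div] at hmain
  apply Tendsto.congr _ hmain
  intro n
  rw [mul_div_assoc', ← add_div]
  congr 1
  rw [Finset.mul_sum, ← Finset.sum_add_distrib]
  apply Finset.sum_congr rfl
  intro k _
  ring

lemma Icc_split_top (F : ℕ → ℝ) (n : ℕ) (hn : 1 ≤ n) :
    ∑ m ∈ Finset.Icc 1 n, F m = ∑ m ∈ Finset.Icc 1 (n-1), F m + F n := by
  obtain ⟨m, rfl⟩ : ∃ m, n = m + 1 := ⟨n - 1, by omega⟩
  simp only [Nat.add_sub_cancel]
  rw [← Finset.Ico_add_one_right_eq_Icc, Finset.sum_Ico_succ_top (by omega), Finset.Ico_add_one_right_eq_Icc]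

lemma sum_Icc_reflect (g : ℕ → ℝ) (n : ℕ) :
    ∑ i ∈ Finset.Icc 1 n, g (n + 1 - i) = ∑ k ∈ Finset.Icc 1 n, g k := by
  rw [← Finset.Ico_add_one_right_eq_Icc, Finset.sum_Ico_eq_sum_range, Finset.sum_Ico_eq_sum_range]
  rw [← Finset.sum_range_reflect]
  apply Finset.sum_congr rfl
  intro i hi
  rw [Finset.mem_range] at hi
  congr 1
  omega

lemma double_sum_eq (f : ℕ → ℕ → ℝ) (v0 : ℝ) (g : ℕ → ℝ)
    (h1 : ∀ i, f i i = v0) (h2 : ∀ i j, i ≠ j → f i j = g (max i j - min i j)) :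
    ∀ n : ℕ, ∑ i ∈ Finset.Icc 1 n, ∑ j ∈ Finset.Icc 1 n, f i j
      = n * v0 + 2 * ∑ k ∈ Finset.Icc 1 (n-1), ((n:ℝ) - k) * g k := by
  intro n
  induction n with
  | zero => simp
  | succ n ih =>
    have hIcc : ∀ (F : ℕ → ℝ), ∑ j ∈ Finset.Icc 1 (n+1), F j
        = ∑ j ∈ Finset.Icc 1 n, F j + F (n+1) := by
      intro F
      rw [← Finset.Ico_add_one_right_eq_Icc, Finset.sum_Ico_succ_top (by omega), Finset.Ico_add_one_right_eq_Icc]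
    have hcross : ∀ i ∈ Finset.Icc 1 n, f i (n+1) = g (n+1-i) ∧ f (n+1) i = g (n+1-i) := by
      intro i hi
      rw [Finset.mem_Icc] at hi
      have hne : i ≠ n+1 := by omega
      constructor
      · rw [h2 i (n+1) hne]; congr 1; omega
      · rw [h2 (n+1) i (Ne.symm hne)]; congr 1; omega
    have hLHS : ∑ i ∈ Finset.Icc 1 (n+1), ∑ j ∈ Finset.Icc 1 (n+1), f i j
        = (∑ i ∈ Finset.Icc 1 n, ∑ j ∈ Finset.Icc 1 n, f i j)
          + 2 * ∑ k ∈ Finset.Icc 1 n, g k + v0 := by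
      rw [hIcc (fun i => ∑ j ∈ Finset.Icc 1 (n+1), f i j)]
      have e1 : ∑ i ∈ Finset.Icc 1 n, ∑ j ∈ Finset.Icc 1 (n+1), f i j
          = ∑ i ∈ Finset.Icc 1 n, (∑ j ∈ Finset.Icc 1 n, f i j + f i (n+1)) := by
        apply Finset.sum_congr rfl; intro i _; exact hIcc _
      rw [e1, Finset.sum_add_distrib, hIcc (fun j => f (n+1) j), h1 (n+1)]
      have e2 : ∑ i ∈ Finset.Icc 1 n, f i (n+1) = ∑ k ∈ Finset.Icc 1 n, g k := by
        rw [← sum_Icc_reflect g n]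
        exact Finset.sum_congr rfl (fun i hi => (hcross i hi).1)
      have e3 : ∑ j ∈ Finset.Icc 1 n, f (n+1) j = ∑ k ∈ Finset.Icc 1 n, g k := by
        rw [← sum_Icc_reflect g n]
        exact Finset.sum_congr rfl (fun i hi => (hcross i hi).2)
      rw [e2, e3]
      ring
    rw [hLHS, ih]
    have hstep : ∑ k ∈ Finset.Icc 1 ((n+1)-1), (((n+1:ℕ):ℝ) - k) * g k
        = ∑ k ∈ Finset.Icc 1 (n-1), ((n:ℝ) - k) * g k + ∑ k ∈ Finset.Icc 1 n, g k := by
      simp only [Nat.add_sub_cancel]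
      have e4 : ∑ k ∈ Finset.Icc 1 n, (((n+1:ℕ):ℝ) - k) * g k
          = ∑ k ∈ Finset.Icc 1 n, (((n:ℝ) - k) * g k + g k) := by
        apply Finset.sum_congr rfl
        intro k _
        push_cast
        ring
      rw [e4, Finset.sum_add_distrib]
      congr 1
      rcases Nat.eq_zero_or_pos n with hn | hn
      · subst hn; simp
      · rw [Icc_split_top (fun k => ((n:ℝ) - k) * g k) n hn]
        simp
    rw [hstep]
    push_cast
    ring

lemma sum_weights (a : ℕ → ℝ) :
    ∀ n : ℕ, ∑ k ∈ Finset.Icc 1 (n-1), ((n:ℝ) - k) * a k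
      = ∑ m ∈ Finset.Icc 1 (n-1), ∑ k ∈ Finset.Icc 1 m, a k := by
  intro n
  induction n with
  | zero => simp
  | succ n ih =>
    simp only [Nat.add_sub_cancel]
    have e1 : ∑ k ∈ Finset.Icc 1 n, (((n+1:ℕ):ℝ) - k) * a k
        = ∑ k ∈ Finset.Icc 1 n, (((n:ℝ) - k) * a k + a k) := by
      apply Finset.sum_congr rfl; intro k _; push_cast; ring
    rw [e1, Finset.sum_add_distrib]
    rcases Nat.eq_zero_or_pos n with hn | hn
    · subst hn; simp
    · rw [Icc_split_top (fun k => ((n:ℝ) - k) * a k) n hn]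
      simp only [Nat.cast_id, sub_self, zero_mul, add_zero]
      rw [ih, Icc_split_top (fun m => ∑ k ∈ Finset.Icc 1 m, a k) n hn]

lemma covar_sum_sum {Ω : Type*} [MeasurableSpace Ω] (μ : Measure Ω) [IsProbabilityMeasure μ]
    (X : ℕ → Ω → ℝ) (hL2 : ∀ t, MemLp (X t) 2 μ) (s : Finset ℕ) :
    covar μ (fun ω => ∑ t ∈ s, X t ω) (fun ω => ∑ t ∈ s, X t ω)
      = ∑ i ∈ s, ∑ j ∈ s, covar μ (X i) (X j) := by
  have hone : (1:ENNReal)/1 = 1/2 + 1/2 := by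
    rw [ENNReal.div_add_div_same, one_add_one_eq_two, div_one,
      ENNReal.div_self (by norm_num) (by norm_num)]
  have hint : ∀ t, Integrable (X t) μ := fun t => (hL2 t).integrable one_le_two
  have hmul : ∀ i j, Integrable (fun ω => X i ω * X j ω) μ := by
    intro i j
    have : MemLp (X i • X j) 1 μ := (hL2 j).smul (hL2 i)
    exact this.integrable le_rfl
  have hI1 : ∫ ω, (∑ t ∈ s, X t ω) ∂μ = ∑ t ∈ s, ∫ ω, X t ω ∂μ :=
    integral_finset_sum s (fun t _ => hint t)
  have hI2 : ∫ ω, (∑ i ∈ s, X i ω) * (∑ j ∈ s, X j ω) ∂μ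
      = ∑ i ∈ s, ∑ j ∈ s, ∫ ω, X i ω * X j ω ∂μ := by
    have e : ∀ ω, (∑ i ∈ s, X i ω) * (∑ j ∈ s, X j ω)
        = ∑ i ∈ s, ∑ j ∈ s, X i ω * X j ω := by
      intro ω
      rw [Finset.sum_mul_sum]
    rw [integral_congr_ae (Eventually.of_forall e)]
    rw [integral_finset_sum s (fun i _ => integrable_finset_sum s (fun j _ => hmul i j))]
    exact Finset.sum_congr rfl fun i _ => integral_finset_sum s (fun j _ => hmul i j)
  simp only [covar]
  rw [hI2, hI1, Finset.sum_mul_sum, ← Finset.sum_sub_distrib]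
  exact Finset.sum_congr rfl fun i _ => by rw [← Finset.sum_sub_distrib]

/-- If `{X_t}` is stationary with autocovariance
`γ(k) = C ℓ(k) k^{2d-1}` for `k ≥ 1`, where `0 < d < 1/2`, `C > 0` and `ℓ` is slowly
varying with `ℓ(k) → (2d+1)/(4d)`, then
`var(Σ_{t=1}^n X_t) ∼ C ℓ(n) n^{2d+1} / (d(2d+1))` as `n → ∞`. -/
theorem variance_partial_sum_longmemory
    {Ω : Type*} [MeasurableSpace Ω] (μ : Measure Ω) [IsProbabilityMeasure μ]
    (X : ℕ → Ω → ℝ) (C d : ℝ) (hd1 : 0 < d) (hd2 : d < 1/2) (hC : 0 < C)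
    (ℓ : ℕ → ℝ) (hℓ : Tendsto ℓ atTop (nhds ((2*d+1)/(4*d))))
    (hL2 : ∀ t, MemLp (X t) 2 μ)
    (γ : ℕ → ℝ)
    (hγ : ∀ k : ℕ, 1 ≤ k → γ k = C * ℓ k * (k : ℝ) ^ (2*d - 1))
    (hcov : ∀ s t : ℕ, s ≠ t → covar μ (X s) (X t) = γ (max s t - min s t))
    (hvar : ∀ t : ℕ, covar μ (X t) (X t) = covar μ (X 0) (X 0)) :
    Tendsto (fun n : ℕ =>
        covar μ (fun ω => ∑ t ∈ Finset.Icc 1 n, X t ω)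
                (fun ω => ∑ t ∈ Finset.Icc 1 n, X t ω)
          / (C * ℓ n * (n : ℝ) ^ (2*d + 1) / (d * (2*d + 1))))
      atTop (nhds 1) := by
  set L : ℝ := (2*d+1)/(4*d) with hLdef
  have hL : 0 < L := by positivity
  set v0 : ℝ := covar μ (X 0) (X 0) with hv0
  set T : ℕ → ℝ := fun m => ∑ k ∈ Finset.Icc 1 m, ℓ k * (k:ℝ)^(2*d-1) with hT
  -- numerator formula
  have hNum : ∀ n : ℕ,
      covar μ (fun ω => ∑ t ∈ Finset.Icc 1 n, X t ω) (fun ω => ∑ t ∈ Finset.Icc 1 n, X t ω)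
      = (n:ℝ) * v0 + 2 * (C * ∑ m ∈ Finset.Icc 1 (n-1), T m) := by
    intro n
    rw [covar_sum_sum μ X hL2 (Finset.Icc 1 n),
      double_sum_eq (fun i j => covar μ (X i) (X j)) v0 γ hvar hcov n]
    congr 1
    have e1 : ∑ k ∈ Finset.Icc 1 (n-1), ((n:ℝ) - k) * γ k
        = ∑ k ∈ Finset.Icc 1 (n-1), ((n:ℝ) - k) * (C * (ℓ k * (k:ℝ)^(2*d-1))) := by
      apply Finset.sum_congr rfl
      intro k hk
      rw [Finset.mem_Icc] at hk
      rw [hγ k hk.1]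
      ring
    rw [e1]
    have e2 : ∑ k ∈ Finset.Icc 1 (n-1), ((n:ℝ) - k) * (C * (ℓ k * (k:ℝ)^(2*d-1)))
        = C * ∑ k ∈ Finset.Icc 1 (n-1), ((n:ℝ) - k) * (ℓ k * (k:ℝ)^(2*d-1)) := by
      rw [Finset.mul_sum]
      apply Finset.sum_congr rfl
      intro k _
      ring
    rw [e2, sum_weights (fun k => ℓ k * (k:ℝ)^(2*d-1)) n]
  -- step 1
  have h1lim : Tendsto (fun m : ℕ => T m / (m:ℝ)^(2*d)) atTop (nhds (L/(2*d))) := by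
    have := weighted_sum_div_tendsto (2*d-1) (by linarith) ℓ L hℓ
    simpa [show 2*d-1+1 = 2*d by ring] using this
  -- step 2
  have h2lim0 : Tendsto (fun n : ℕ => (∑ m ∈ Finset.Icc 1 n, T m) / (n:ℝ)^(2*d+1))
      atTop (nhds (L/(2*d)/(2*d+1))) := by
    have := weighted_sum_div_tendsto (2*d) (by linarith) (fun m => T m / (m:ℝ)^(2*d))
      (L/(2*d)) h1lim
    apply Tendsto.congr _ this
    intro n
    congr 1
    apply Finset.sum_congr rfl
    intro m hm
    rw [Finset.mem_Icc] at hm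
    have : ((m:ℝ))^(2*d) ≠ 0 := (rpow_pos_of_pos (by exact_mod_cast hm.1) _).ne'
    rw [div_mul_cancel₀ _ this]
  set β : ℝ := L/(2*d)/(2*d+1) with hβ
  -- shift
  have hG : Tendsto (fun n : ℕ => (∑ m ∈ Finset.Icc 1 (n-1), T m) / (n:ℝ)^(2*d+1))
      atTop (nhds β) := by
    have hcomp : Tendsto (fun n : ℕ => (∑ m ∈ Finset.Icc 1 (n-1), T m) / (((n-1:ℕ)):ℝ)^(2*d+1))
        atTop (nhds β) := h2lim0.comp (tendsto_sub_atTop_nat 1)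
    have haux : Tendsto (fun n : ℕ => (((n-1:ℕ)):ℝ)/(n:ℝ)) atTop (nhds 1) := by
      have h0 : Tendsto (fun n : ℕ => 1 - ((n:ℝ))⁻¹) atTop (nhds (1 - 0)) :=
        tendsto_const_nhds.sub (tendsto_inv_atTop_zero.comp (tendsto_natCast_atTop_atTop (R := ℝ)))
      rw [sub_zero] at h0
      apply Tendsto.congr' _ h0
      filter_upwards [eventually_ge_atTop 1] with n hn
      have hn0 : (0:ℝ) < (n:ℝ) := by exact_mod_cast hn
      rw [Nat.cast_sub hn, Nat.cast_one]
      field_simp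
    have hratio : Tendsto (fun n : ℕ => (((n-1:ℕ)):ℝ)^(2*d+1)/(n:ℝ)^(2*d+1)) atTop (nhds 1) := by
      have := haux.rpow_const (Or.inl one_ne_zero) (p := 2*d+1)
      rw [one_rpow] at this
      apply Tendsto.congr' _ this
      filter_upwards [eventually_ge_atTop 1] with n hn
      have hn0 : (0:ℝ) ≤ (n:ℝ) := Nat.cast_nonneg n
      rw [div_rpow (Nat.cast_nonneg _) hn0]
    have := hcomp.mul hratio
    rw [mul_one] at this
    apply Tendsto.congr' _ this
    filter_upwards [eventually_ge_atTop 2] with n hn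
    have hn1 : (0:ℝ) < (((n-1:ℕ)):ℝ) := by
      have : 1 ≤ n - 1 := by omega
      exact_mod_cast Nat.lt_of_lt_of_le Nat.zero_lt_one this
    have hne : (((n-1:ℕ)):ℝ)^(2*d+1) ≠ 0 := (rpow_pos_of_pos hn1 _).ne'
    rw [div_mul_div_comm, mul_comm (∑ m ∈ Finset.Icc 1 (n-1), T m) ((((n-1:ℕ)):ℝ)^(2*d+1)),
      mul_div_mul_left _ _ hne]
  -- variance term
  have h3 : Tendsto (fun n : ℕ => (n:ℝ)*v0/(n:ℝ)^(2*d+1)) atTop (nhds 0) := by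
    have hneg : Tendsto (fun n : ℕ => (n:ℝ)^(-(2*d))) atTop (nhds 0) :=
      (tendsto_rpow_neg_atTop (by linarith)).comp (tendsto_natCast_atTop_atTop (R := ℝ))
    have h0 := hneg.const_mul v0
    rw [mul_zero] at h0
    apply Tendsto.congr' _ h0
    filter_upwards [eventually_ge_atTop 1] with n hn
    have hn0 : (0:ℝ) < (n:ℝ) := by exact_mod_cast hn
    have e : (n:ℝ) * v0 / (n:ℝ)^(2*d+1) = v0 * ((n:ℝ)^(1:ℝ) / (n:ℝ)^(2*d+1)) := by
      rw [rpow_one]; ring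
    rw [e, ← rpow_sub hn0, show (1:ℝ) - (2*d+1) = -(2*d) by ring]
  -- numerator over n^{2d+1}
  have hNlim : Tendsto (fun n : ℕ =>
      covar μ (fun ω => ∑ t ∈ Finset.Icc 1 n, X t ω) (fun ω => ∑ t ∈ Finset.Icc 1 n, X t ω)
        / (n:ℝ)^(2*d+1)) atTop (nhds (0 + 2*C*β)) := by
    have := h3.add (hG.const_mul (2*C))
    apply Tendsto.congr _ this
    intro n
    rw [hNum n]
    ring
  -- denominator part
  have hDen : Tendsto (fun n : ℕ => C * ℓ n / (d*(2*d+1))) atTop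
      (nhds (C * L / (d*(2*d+1)))) := (hℓ.const_mul C).div_const _
  have hDne : C * L / (d*(2*d+1)) ≠ 0 := by positivity
  have hfin := hNlim.div hDen hDne
  have hval : (0 + 2*C*β) / (C * L / (d*(2*d+1))) = 1 := by
    rw [hβ]
    rw [zero_add]
    rw [div_eq_one_iff_eq hDne]
    field_simp
  rw [hval] at hfin
  apply Tendsto.congr _ hfin
  intro n
  rw [show C * ℓ n * (n:ℝ)^(2*d+1) / (d*(2*d+1)) = (C * ℓ n / (d*(2*d+1))) * (n:ℝ)^(2*d+1) by ring,
    div_mul_eq_div_div_swap]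
  rfl
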